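/- Let X be a nonempty proper metric space (every closed bounded subset is compact) which is contractible as a topological space. Let G be a group acting on X by isometries such that the orbit space X/G (the quotient of X by the orbit equivalence relation, with the quotient topology) is compact. Then X is uniformly contractible: there exists a function C : (0, ∞) → ℝ with C(R) ≥ R for all R > 0, such that for every x ∈ X and every R > 0, the open metric ball B_R(x) is contractible inside B_{C(R)}(x); that is, the inclusion map B_R(x) ↪ B_{C(R)}(x) is null-homotopic. -/

import Mathlib

open Metric ContinuousMap unitInterval

lemma uc_key {X : Type*} [MetricSpace X]
    [ProperSpace X] [Nonempty X] [ContractibleSpace X]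
    {G : Type*} [Group G] [MulAction G X]
    (hiso : ∀ g : G, Isometry (fun x : X => g • x))
    (hcocompact : CompactSpace (Quotient (MulAction.orbitRel G X)))
    (R : ℝ) (hRpos : 0 < R) :
    ∃ C' : ℝ, ∃ h : R ≤ C', ∀ x : X,
      ContinuousMap.Nullhomotopic
        (⟨Set.inclusion (Metric.ball_subset_ball h),
          continuous_inclusion (Metric.ball_subset_ball h)⟩ :
          C(Metric.ball x R, Metric.ball x C')) := by
  obtain ⟨x₀, ⟨H⟩⟩ := id_nullhomotopic X
  obtain ⟨p⟩ := (inferInstance : Nonempty X)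
  set π : X → Quotient (MulAction.orbitRel G X) := Quotient.mk _ with hπ
  -- open images
  have hopen : ∀ (n : ℕ), IsOpen (π '' ball p n) := by
    intro n
    rw [isOpen_coinduced (f := π)]
    have : π ⁻¹' (π '' ball p n) = ⋃ g : G, (fun y : X => g • y) '' ball p n := by
      ext y
      simp only [Set.mem_preimage, Set.mem_image, Set.mem_iUnion]
      constructor
      · rintro ⟨u, hu, hq⟩
        have h' : u ∈ MulAction.orbit G y := Quotient.exact hq
        rw [MulAction.mem_orbit_iff] at h'
        obtain ⟨g, hg⟩ := h'
        exact ⟨g⁻¹, u, hu, by rw [← hg, inv_smul_smul]⟩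
      · rintro ⟨g, u, hu, rfl⟩
        refine ⟨u, hu, Quotient.sound ?_⟩
        show u ∈ MulAction.orbit G (g • u)
        rw [MulAction.mem_orbit_iff]
        exact ⟨g⁻¹, by rw [smul_smul, inv_mul_cancel, one_smul]⟩
    rw [this]
    refine isOpen_iUnion fun g => ?_
    have him : (fun y : X => g • y) '' ball p n = (fun y : X => g⁻¹ • y) ⁻¹' ball p n := by
      ext y
      simp only [Set.mem_image, Set.mem_preimage]
      constructor
      · rintro ⟨u, hu, rfl⟩; simpa [inv_smul_smul] using hu
      · intro h; exact ⟨g⁻¹ • y, h, smul_inv_smul g y⟩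
    rw [him]
    exact isOpen_ball.preimage (hiso g⁻¹).continuous
  -- one ball image covers everything
  obtain ⟨N, hN⟩ := (isCompact_univ (X := Quotient (MulAction.orbitRel G X))).elim_directed_cover
    (fun n : ℕ => π '' ball p n) hopen
    (by
      intro q _
      obtain ⟨y, rfl⟩ := Quotient.exists_rep q
      obtain ⟨n, hn⟩ := exists_nat_gt (dist y p)
      exact Set.mem_iUnion.2 ⟨n, ⟨y, by simpa [mem_ball] using hn, rfl⟩⟩)
    (fun m n => ⟨m + n, Set.image_mono (ball_subset_ball (by exact_mod_cast Nat.le_add_right m n)),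
      Set.image_mono (ball_subset_ball (by exact_mod_cast Nat.le_add_left n m))⟩)
  set r0 : ℝ := (N : ℝ) with hr0
  have hmove : ∀ x : X, ∃ g : G, dist (g • x) p < r0 := by
    intro x
    have hx : π x ∈ π '' ball p N := hN (Set.mem_univ _)
    obtain ⟨y, hy, hq⟩ := hx
    have h' : y ∈ MulAction.orbit G x := Quotient.exact hq
    rw [MulAction.mem_orbit_iff] at h'
    obtain ⟨g, hg⟩ := h'
    exact ⟨g, by rw [hg]; exact mem_ball.mp hy⟩
  have hr0nonneg : (0:ℝ) ≤ r0 := Nat.cast_nonneg N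
  -- uniform bound on the homotopy over the compact set
  have hScomp : IsCompact ((Set.univ : Set I) ×ˢ closedBall p (r0 + R)) :=
    isCompact_univ.prod (isCompact_closedBall p _)
  have hSne : ((Set.univ : Set I) ×ˢ closedBall p (r0 + R)).Nonempty :=
    ⟨(0, p), Set.mem_univ _, mem_closedBall_self (by linarith)⟩
  obtain ⟨z, hz, hzmax⟩ := hScomp.exists_isMaxOn hSne
    ((continuous_const.dist (H.continuous.comp continuous_id)).continuousOn :
      ContinuousOn (fun q : I × X => dist p (H q)) _)
  set M : ℝ := dist p (H z) with hM
  refine ⟨max R (r0 + M + 1), le_max_left _ _, fun x => ?_⟩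
  obtain ⟨g, hg⟩ := hmove x
  have hdist : ∀ a b : X, dist (g • a) (g • b) = dist a b := fun a b => (hiso g).dist_eq a b
  have hgx : g • x ∈ closedBall p (r0 + R) :=
    mem_closedBall.2 (le_of_lt (lt_of_lt_of_le (mem_ball.1 (mem_ball.2 hg)) (by linarith)))
  have hmem : ∀ (t : I) (y : X), y ∈ ball x R →
      g⁻¹ • (H (t, g • y)) ∈ ball x (max R (r0 + M + 1)) := by
    intro t y hy
    have h1 : g • y ∈ closedBall p (r0 + R) := by
      rw [mem_closedBall]
      calc dist (g • y) p ≤ dist (g • y) (g • x) + dist (g • x) p := dist_triangle _ _ _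
        _ ≤ R + r0 := add_le_add (le_of_lt (by rw [hdist]; exact mem_ball.1 hy)) (le_of_lt hg)
        _ = r0 + R := by ring
    have h2 : dist p (H (t, g • y)) ≤ M := hzmax (Set.mem_prod.2 ⟨Set.mem_univ _, h1⟩)
    rw [mem_ball]
    have h3 : dist (g⁻¹ • H (t, g • y)) x = dist (H (t, g • y)) (g • x) := by
      rw [← hdist (g⁻¹ • H (t, g • y)) x, smul_inv_smul]
    calc dist (g⁻¹ • H (t, g • y)) x = dist (H (t, g • y)) (g • x) := h3
      _ ≤ dist (H (t, g • y)) p + dist p (g • x) := dist_triangle _ _ _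
      _ ≤ M + r0 := add_le_add (by rw [dist_comm]; exact h2) (le_of_lt (by rwa [dist_comm] at hg))
      _ < r0 + M + 1 := by linarith
      _ ≤ max R (r0 + M + 1) := le_max_right _ _
  -- the endpoint
  have hx₀ : dist p x₀ ≤ M := by
    have h5 := hzmax (a := ((1:I), g • x)) (Set.mem_prod.2 ⟨Set.mem_univ _, hgx⟩)
    simpa [H.map_one_left] using h5
  have hpt : g⁻¹ • x₀ ∈ ball x (max R (r0 + M + 1)) := by
    rw [mem_ball]
    have h3 : dist (g⁻¹ • x₀) x = dist x₀ (g • x) := by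
      rw [← hdist (g⁻¹ • x₀) x, smul_inv_smul]
    calc dist (g⁻¹ • x₀) x = dist x₀ (g • x) := h3
      _ ≤ dist x₀ p + dist p (g • x) := dist_triangle _ _ _
      _ ≤ M + r0 := add_le_add (by rw [dist_comm]; exact hx₀) (le_of_lt (by rwa [dist_comm] at hg))
      _ < r0 + M + 1 := by linarith
      _ ≤ max R (r0 + M + 1) := le_max_right _ _
  refine ⟨⟨g⁻¹ • x₀, hpt⟩, ⟨?_⟩⟩
  exact
    { toFun := fun q => ⟨g⁻¹ • (H (q.1, g • (q.2 : X))), hmem q.1 q.2 q.2.2⟩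
      continuous_toFun := by
        refine Continuous.subtype_mk ?_ _
        exact (hiso g⁻¹).continuous.comp (H.continuous.comp
          (continuous_fst.prodMk ((hiso g).continuous.comp
            (continuous_subtype_val.comp continuous_snd))))
      map_zero_left := by
        intro y
        ext
        show g⁻¹ • (H ((0:I), g • (y:X))) = ((Set.inclusion (ball_subset_ball (le_max_left _ _)) y : ball x (max R (r0 + M + 1))) : X)
        rw [H.apply_zero]
        simp [inv_smul_smul, Set.inclusion]
      map_one_left := by
        intro y
        ext
        show g⁻¹ • (H ((1:I), g • (y:X))) = g⁻¹ • x₀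
        rw [H.apply_one]
        rfl }

theorem uniformly_contractible_of_cocompact {X : Type*} [MetricSpace X]
    [ProperSpace X] [Nonempty X] [ContractibleSpace X]
    {G : Type*} [Group G] [MulAction G X]
    (hiso : ∀ g : G, Isometry (fun x : X => g • x))
    (hcocompact : CompactSpace (Quotient (MulAction.orbitRel G X))) :
    ∃ C : ℝ → ℝ, ∀ R > (0 : ℝ), ∃ hR : R ≤ C R, ∀ x : X,
      ContinuousMap.Nullhomotopic
        (⟨Set.inclusion (Metric.ball_subset_ball hR),
          continuous_inclusion (Metric.ball_subset_ball hR)⟩ :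
          C(Metric.ball x R, Metric.ball x (C R))) := by
  refine ⟨fun R => if h : 0 < R then (uc_key hiso hcocompact R h).choose else 0, fun R hR => ?_⟩
  beta_reduce
  rw [dif_pos hR]
  obtain ⟨h1, h2⟩ := (uc_key hiso hcocompact R hR).choose_spec
  exact ⟨h1, fun x => h2 x⟩
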